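/- Let $K\ge 2$, $L\ge 2$, let $w,v$ be probability vectors on $[K]$, let $Q,R$ be $K\times K$ stochastic matrices, and let $F_1,\dots,F_K$, $G_1,\dots,G_K$ be probability distributions on a measurable space $(\mathscr{Y},\mathcal{Y})$. Define $P_{w,Q,F} = \sum_{k_1,\dots,k_L\in[K]} w_{k_1} Q_{k_1,k_2}\cdots Q_{k_{L-1},k_L} \bigotimes_{l=1}^L F_{k_l}$, and similarly $P_{v,R,G}$. Then $h^2(P_{w,Q,F}, P_{v,R,G}) \le h^2(w,v) + (L-1)\max_{k\in[K]} h^2(Q_{k\cdot}, R_{k\cdot}) + L\max_{k\in[K]} h^2(F_k,G_k)$, where $h^2(w,v)$ and $h^2(Q_{k\cdot},R_{k\cdot})$ are squared Hellinger distances of probability vectors. -/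

import Mathlib

open MeasureTheory
open scoped ENNReal NNReal

/-- The squared Hellinger distance between two measures, defined via densities with respect to the
dominating measure `P + Q`: `h²(P,Q) = (1/2) ∫ (√(dP/dμ) - √(dQ/dμ))² dμ` with `μ = P + Q`. -/
noncomputable def sqHellinger {α : Type*} [MeasurableSpace α] (P Q : Measure α) : ℝ :=
  (1 / 2) * ∫ x, (Real.sqrt ((P.rnDeriv (P + Q)) x).toReal
    - Real.sqrt ((Q.rnDeriv (P + Q)) x).toReal) ^ 2 ∂(P + Q)

/-- The squared Hellinger distance between two finitely supported vectors (e.g. probability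
vectors): `h²(a,b) = (1/2) ∑ (√aₖ - √bₖ)²`. -/
noncomputable def sqHellingerVec {ι : Type*} [Fintype ι] (a b : ι → ℝ) : ℝ :=
  (1 / 2) * ∑ k, (Real.sqrt (a k) - Real.sqrt (b k)) ^ 2

/-- The law `P_{w,Q,F}` of `L = n+1` consecutive observations of a hidden Markov model with
initial distribution `w`, transition matrix `Q` and emission distributions `F`:
`∑_{k₁,…,k_L} w_{k₁} Q_{k₁k₂} ⋯ Q_{k_{L-1}k_L} ⨂_{l} F_{k_l}`. -/
noncomputable def hmmMix {Y : Type*} [MeasurableSpace Y] (K n : ℕ)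
    (w : Fin K → ℝ) (Q : Fin K → Fin K → ℝ) (F : Fin K → Measure Y) :
    Measure (Fin (n + 1) → Y) :=
  ∑ k : Fin (n + 1) → Fin K,
    (ENNReal.ofReal (w (k 0) * ∏ l : Fin n, Q (k l.castSucc) (k l.succ))) •
      Measure.pi (fun l => F (k l))

set_option linter.unusedSectionVars false
set_option maxHeartbeats 1000000

/-! ### Auxiliary algebraic lemmas -/

section Alg
variable {ι : Type*} [Fintype ι]

lemma aux_sqrt_prod {s : Finset ι} (u : ι → ℝ) (hu : ∀ i ∈ s, 0 ≤ u i) :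
    Real.sqrt (∏ i ∈ s, u i) = ∏ i ∈ s, Real.sqrt (u i) := by
  induction s using Finset.cons_induction with
  | empty => simp
  | cons a s ha ih =>
    rw [Finset.prod_cons, Finset.prod_cons, Real.sqrt_mul (hu a (Finset.mem_cons_self a s)),
      ih (fun i hi => hu i (Finset.mem_cons_of_mem hi))]

lemma sqHellingerVec_eq (a b : ι → ℝ) (ha : ∀ k, 0 ≤ a k) (hb : ∀ k, 0 ≤ b k)
    (ha1 : ∑ k, a k = 1) (hb1 : ∑ k, b k = 1) :
    sqHellingerVec a b = 1 - ∑ k, Real.sqrt (a k * b k) := by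
  have : ∀ k : ι, (Real.sqrt (a k) - Real.sqrt (b k)) ^ 2
      = a k + b k - 2 * Real.sqrt (a k * b k) := by
    intro k
    rw [sub_sq, Real.sq_sqrt (ha k), Real.sq_sqrt (hb k), Real.sqrt_mul (ha k)]
    ring
  rw [sqHellingerVec, Finset.sum_congr rfl (fun k _ => this k)]
  rw [Finset.sum_sub_distrib, Finset.sum_add_distrib, ha1, hb1, ← Finset.mul_sum]
  ring

lemma sqHellingerVec_nonneg (a b : ι → ℝ) : 0 ≤ sqHellingerVec a b := by
  unfold sqHellingerVec
  positivity

lemma aux_sum_sqrt_mul_le (a b : ι → ℝ) (ha : ∀ k, 0 ≤ a k) (hb : ∀ k, 0 ≤ b k) :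
    ∑ k, Real.sqrt (a k * b k) ≤ Real.sqrt ((∑ k, a k) * (∑ k, b k)) := by
  have h := Finset.sum_mul_sq_le_sq_mul_sq Finset.univ (fun k => Real.sqrt (a k))
    (fun k => Real.sqrt (b k))
  simp only [Real.sq_sqrt (ha _), Real.sq_sqrt (hb _)] at h
  have h2 : (∑ k, Real.sqrt (a k * b k)) ^ 2 ≤ (∑ k, a k) * (∑ k, b k) := by
    calc (∑ k, Real.sqrt (a k * b k)) ^ 2
        = (∑ k, Real.sqrt (a k) * Real.sqrt (b k)) ^ 2 := by
          congr 1; exact Finset.sum_congr rfl fun k _ => Real.sqrt_mul (ha k) _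
      _ ≤ _ := h
  have h3 : (0:ℝ) ≤ ∑ k, Real.sqrt (a k * b k) :=
    Finset.sum_nonneg fun k _ => Real.sqrt_nonneg _
  nlinarith [Real.sq_sqrt (mul_nonneg (Finset.sum_nonneg fun k (_ : k ∈ Finset.univ) => ha k)
      (Finset.sum_nonneg fun k (_ : k ∈ Finset.univ) => hb k)),
    Real.sqrt_nonneg ((∑ k, a k) * (∑ k, b k))]

lemma aux_final_bound (a b c : ℝ) (m : ℕ) (ha : 0 ≤ a) (ha1 : a ≤ 1) (hb : 0 ≤ b) (hb1 : b ≤ 1)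
    (hc : 0 ≤ c) (hc1 : c ≤ 1) :
    1 - (1 - a) * (1 - b) ^ m * (1 - c) ^ (m + 1) ≤ a + m * b + (m + 1) * c := by
  have hB : ∀ (x : ℝ) (k : ℕ), 0 ≤ x → x ≤ 1 → 1 - k * x ≤ (1 - x) ^ k := by
    intro x k hx hx1
    have := one_add_mul_le_pow (a := -x) (by linarith) k
    calc 1 - k * x = 1 + k * (-x) := by ring
      _ ≤ (1 + -x) ^ k := this
      _ = (1 - x) ^ k := by ring_nf
  have h1 := hB b m hb hb1
  have h2 := hB c (m + 1) hc hc1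
  have p1 : (0:ℝ) ≤ (1 - b) ^ m := pow_nonneg (by linarith) m
  have p2 : (0:ℝ) ≤ (1 - c) ^ (m + 1) := pow_nonneg (by linarith) (m + 1)
  have p1' : (1 - b) ^ m ≤ 1 := pow_le_one₀ (by linarith) (by linarith)
  have p2' : (1 - c) ^ (m + 1) ≤ 1 := pow_le_one₀ (by linarith) (by linarith)
  set X := (1 - b) ^ m with hX
  set Y := (1 - c) ^ (m + 1) with hY
  have hXY : X * Y ≤ 1 := mul_le_one₀ p1' p2 p2'
  have key : 1 - (1 - a) * X * Y ≤ a + (1 - X) + (1 - Y) := by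
    nlinarith [mul_nonneg (sub_nonneg.2 p1') (sub_nonneg.2 p2'), mul_nonneg ha (sub_nonneg.2 hXY)]
  push_cast at h1 h2 ⊢
  linarith

end Alg

/-! ### Chain (Markov path) sums -/

section Chain
variable {K : ℕ}

lemma chain_cons_sum (m : ℕ) (g : (Fin (m + 2) → Fin K) → ℝ) :
    ∑ k : Fin (m + 2) → Fin K, g k
      = ∑ j : Fin K, ∑ k : Fin (m + 1) → Fin K, g (Fin.cons j k) := by
  rw [← (Fintype.sum_equiv (Fin.consEquiv (fun _ => Fin K)) (fun p => g (Fin.cons p.1 p.2)) g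
    (fun p => rfl)), Fintype.sum_prod_type]

lemma chain_prod_cons (m : ℕ) (t : Fin K → Fin K → ℝ) (j : Fin K) (k : Fin (m + 1) → Fin K) :
    (∏ l : Fin (m + 1), t ((Fin.cons j k : Fin (m+2) → Fin K) l.castSucc)
        ((Fin.cons j k : Fin (m+2) → Fin K) l.succ))
      = t j (k 0) * ∏ l : Fin m, t (k l.castSucc) (k l.succ) := by
  rw [Fin.prod_univ_succ]
  congr 1

lemma chain_sum_eq (m : ℕ) (s : Fin K → ℝ) (t : Fin K → Fin K → ℝ)
    (ht1 : ∀ i, ∑ j, t i j = 1) :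
    ∑ k : Fin (m + 1) → Fin K, s (k 0) * ∏ l : Fin m, t (k l.castSucc) (k l.succ)
      = ∑ i, s i := by
  induction m generalizing s with
  | zero =>
    simp only [Finset.univ_eq_empty, Finset.prod_empty, mul_one]
    exact Fintype.sum_equiv (Equiv.funUnique (Fin 1) (Fin K)) _ _ (fun k => rfl)
  | succ m ih =>
    rw [chain_cons_sum m]
    have : ∀ j : Fin K, ∑ k : Fin (m + 1) → Fin K,
        s ((Fin.cons j k : Fin (m+2) → Fin K) 0) *
          ∏ l : Fin (m + 1), t ((Fin.cons j k : Fin (m+2) → Fin K) l.castSucc)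
            ((Fin.cons j k : Fin (m+2) → Fin K) l.succ)
        = s j := by
      intro j
      simp only [Fin.cons_zero, chain_prod_cons m t j]
      calc ∑ k : Fin (m + 1) → Fin K, s j * (t j (k 0) * ∏ l : Fin m, t (k l.castSucc) (k l.succ))
          = ∑ k : Fin (m + 1) → Fin K, (s j * t j (k 0)) * ∏ l : Fin m, t (k l.castSucc) (k l.succ) := by
            refine Finset.sum_congr rfl fun k _ => by ring
        _ = ∑ i, s j * t j i := ih (fun i => s j * t j i)
        _ = s j := by rw [← Finset.mul_sum, ht1 j, mul_one]
    rw [Finset.sum_congr rfl fun j _ => this j]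

lemma chain_sum_ge (m : ℕ) (s : Fin K → ℝ) (t : Fin K → Fin K → ℝ) (ε : ℝ)
    (hs0 : ∀ i, 0 ≤ s i) (ht0 : ∀ i j, 0 ≤ t i j) (hε1 : 1 - ε ≥ 0)
    (ht : ∀ i, 1 - ε ≤ ∑ j, t i j) :
    (∑ i, s i) * (1 - ε) ^ m
      ≤ ∑ k : Fin (m + 1) → Fin K, s (k 0) * ∏ l : Fin m, t (k l.castSucc) (k l.succ) := by
  induction m generalizing s with
  | zero =>
    simp only [Finset.univ_eq_empty, Finset.prod_empty, mul_one, pow_zero]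
    exact le_of_eq (Fintype.sum_equiv (Equiv.funUnique (Fin 1) (Fin K)) _ _ (fun k => rfl)).symm
  | succ m ih =>
    rw [chain_cons_sum m]
    have key : ∀ j : Fin K, s j * (1 - ε) ^ (m + 1) ≤ ∑ k : Fin (m + 1) → Fin K,
        s ((Fin.cons j k : Fin (m+2) → Fin K) 0) *
          ∏ l : Fin (m + 1), t ((Fin.cons j k : Fin (m+2) → Fin K) l.castSucc)
            ((Fin.cons j k : Fin (m+2) → Fin K) l.succ) := by
      intro j
      simp only [Fin.cons_zero, chain_prod_cons m t j]
      have h1 : ∑ k : Fin (m + 1) → Fin K,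
          s j * (t j (k 0) * ∏ l : Fin m, t (k l.castSucc) (k l.succ))
          = s j * ∑ k : Fin (m + 1) → Fin K,
            (t j (k 0)) * ∏ l : Fin m, t (k l.castSucc) (k l.succ) := by
        rw [Finset.mul_sum]
      rw [h1]
      have h2 := ih (fun i => t j i) (fun i => ht0 j i)
      have h3 : (1 - ε) * (1 - ε) ^ m ≤ ∑ k : Fin (m + 1) → Fin K,
          t j (k 0) * ∏ l : Fin m, t (k l.castSucc) (k l.succ) := by
        refine le_trans ?_ h2
        exact mul_le_mul_of_nonneg_right (ht j) (pow_nonneg hε1 m)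
      calc s j * (1 - ε) ^ (m + 1)
          = s j * ((1 - ε) * (1 - ε) ^ m) := by ring
        _ ≤ _ := mul_le_mul_of_nonneg_left h3 (hs0 j)
    calc (∑ i, s i) * (1 - ε) ^ (m + 1) = ∑ j, s j * (1 - ε) ^ (m + 1) := by
          rw [Finset.sum_mul]
      _ ≤ _ := Finset.sum_le_sum fun j _ => key j

end Chain

/-! ### Product measure lemmas -/

lemma lintegral_pi_prod {E : Type*} [MeasurableSpace E] : ∀ {L : ℕ} (ν : Fin L → Measure E)
    [∀ i, SigmaFinite (ν i)] (f : Fin L → E → ℝ≥0∞), (∀ i, Measurable (f i)) →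
    ∫⁻ x : Fin L → E, ∏ i, f i (x i) ∂(Measure.pi ν) = ∏ i, ∫⁻ y, f i y ∂(ν i) := by
  intro L
  induction L with
  | zero =>
    intro ν _ f hf
    simp [Measure.pi_of_empty]
  | succ n ih =>
    intro ν _ f hf
    have hmp := (measurePreserving_piFinSuccAbove ν 0).symm
    have hmeas : Measurable (fun x : Fin (n+1) → E => ∏ i, f i (x i)) :=
      Finset.measurable_prod _ fun i _ => (hf i).comp (measurable_pi_apply i)
    rw [← hmp.lintegral_comp hmeas]
    have heq : ∀ z : E × (Fin n → E),
        (∏ i, f i (((MeasurableEquiv.piFinSuccAbove (fun _ => E) 0).symm z) i))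
          = f 0 z.1 * ∏ i : Fin n, f i.succ (z.2 i) := by
      intro z
      rw [Fin.prod_univ_succ]
      simp [MeasurableEquiv.piFinSuccAbove_symm_apply, Fin.insertNthEquiv, Fin.insertNth_zero]
    calc ∫⁻ z, (∏ i, f i (((MeasurableEquiv.piFinSuccAbove (fun _ => E) 0).symm z) i))
            ∂((ν 0).prod (Measure.pi fun j => ν ((0 : Fin (n+1)).succAbove j)))
        = ∫⁻ z : E × (Fin n → E), f 0 z.1 * ∏ i : Fin n, f i.succ (z.2 i)
            ∂((ν 0).prod (Measure.pi fun j => ν ((0 : Fin (n+1)).succAbove j))) := by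
          exact lintegral_congr heq
      _ = (∫⁻ y, f 0 y ∂(ν 0)) * ∫⁻ x : Fin n → E, ∏ i : Fin n, f i.succ (x i)
            ∂(Measure.pi fun j : Fin n => ν j.succ) := by
          simp_rw [Fin.zero_succAbove]
          exact lintegral_prod_mul (f := f 0) (g := fun y : Fin n → E => ∏ i : Fin n, f i.succ (y i))
            (hf 0).aemeasurable
            (Finset.measurable_prod _ fun i _ => (hf i.succ).comp (measurable_pi_apply i)).aemeasurable
      _ = ∏ i, ∫⁻ y, f i y ∂(ν i) := by
          rw [ih (fun j => ν j.succ) (fun i => f i.succ) (fun i => hf i.succ), Fin.prod_univ_succ]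

lemma pi_withDensity {E : Type*} [MeasurableSpace E] {L : ℕ} (ν : Fin L → Measure E)
    [∀ i, SigmaFinite (ν i)] (f : Fin L → E → ℝ≥0∞) (hf : ∀ i, Measurable (f i))
    (hfin : ∀ i, ∫⁻ y, f i y ∂ν i ≠ ⊤) :
    Measure.pi (fun i => (ν i).withDensity (f i))
      = (Measure.pi ν).withDensity (fun x => ∏ i, f i (x i)) := by
  have : ∀ i, IsFiniteMeasure ((ν i).withDensity (f i)) :=
    fun i => isFiniteMeasure_withDensity (hfin i)
  refine Measure.pi_eq fun s hs => ?_
  rw [withDensity_apply _ (MeasurableSet.univ_pi hs), ← lintegral_indicator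
    (MeasurableSet.univ_pi hs)]
  have hpt : ∀ x : Fin L → E, (Set.univ.pi s).indicator (fun x => ∏ i, f i (x i)) x
      = ∏ i, (s i).indicator (f i) (x i) := by
    intro x
    by_cases hx : x ∈ Set.univ.pi s
    · rw [Set.indicator_of_mem hx]
      exact Finset.prod_congr rfl fun i _ =>
        (Set.indicator_of_mem (hx i (Set.mem_univ i)) _).symm
    · rw [Set.indicator_of_notMem hx]
      rw [Set.mem_univ_pi] at hx
      push_neg at hx
      obtain ⟨i, hi⟩ := hx
      exact (Finset.prod_eq_zero (Finset.mem_univ i) (Set.indicator_of_notMem hi _)).symm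
  rw [lintegral_congr hpt, lintegral_pi_prod ν _ (fun i => (hf i).indicator (hs i))]
  exact Finset.prod_congr rfl fun i _ => by
    rw [lintegral_indicator (hs i), withDensity_apply _ (hs i)]

lemma integral_pi_prod {E : Type*} [m : MeasurableSpace E] {L : ℕ} (ν : Fin L → Measure E)
    [hsf : ∀ i, SigmaFinite (ν i)] (f : Fin L → E → ℝ) :
    ∫ x : Fin L → E, ∏ i, f i (x i) ∂(Measure.pi ν) = ∏ i, ∫ y, f i y ∂(ν i) := by
  exact MeasureTheory.integral_fin_nat_prod_eq_prod (E := fun _ => E) (μ := ν) f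

lemma integrable_pi_prod {E : Type*} [m : MeasurableSpace E] {L : ℕ} (ν : Fin L → Measure E)
    [hsf : ∀ i, SigmaFinite (ν i)] (f : Fin L → E → ℝ) (hf : ∀ i, Integrable (f i) (ν i)) :
    Integrable (fun x : Fin L → E => ∏ i, f i (x i)) (Measure.pi ν) := by
  exact MeasureTheory.Integrable.fin_nat_prod (E := fun _ => E) (μ := ν) hf

lemma withDensity_finset_sum {α ι : Type*} [MeasurableSpace α] (μ : Measure α) (s : Finset ι)
    (f : ι → α → ℝ≥0∞) (hf : ∀ i ∈ s, Measurable (f i)) :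
    μ.withDensity (fun x => ∑ i ∈ s, f i x) = ∑ i ∈ s, μ.withDensity (f i) := by
  induction s using Finset.cons_induction with
  | empty => simp
  | cons a s ha ih =>
    simp only [Finset.sum_cons]
    rw [← ih (fun i hi => hf i (Finset.mem_cons_of_mem hi))]
    exact withDensity_add_left (hf a (Finset.mem_cons_self a s)) _

lemma integrable_sqrt_mul {α : Type*} [MeasurableSpace α] {μ : Measure α} {f g : α → ℝ≥0∞}
    (hf : Measurable f) (hg : Measurable g)
    (hf1 : ∫⁻ x, f x ∂μ ≠ ⊤) (hg1 : ∫⁻ x, g x ∂μ ≠ ⊤) :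
    Integrable (fun x => Real.sqrt ((f x).toReal * (g x).toReal)) μ := by
  have If : Integrable (fun x => (f x).toReal) μ :=
    integrable_toReal_of_lintegral_ne_top hf.aemeasurable hf1
  have Ig : Integrable (fun x => (g x).toReal) μ :=
    integrable_toReal_of_lintegral_ne_top hg.aemeasurable hg1
  refine Integrable.mono' ((If.add Ig).div_const 2) ?_ ?_
  · exact (Real.continuous_sqrt.measurable.comp
      (hf.ennreal_toReal.mul hg.ennreal_toReal)).aestronglyMeasurable
  · refine Filter.Eventually.of_forall fun x => ?_
    simp only [Pi.add_apply]
    have ha : (0:ℝ) ≤ (f x).toReal := ENNReal.toReal_nonneg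
    have hb : (0:ℝ) ≤ (g x).toReal := ENNReal.toReal_nonneg
    rw [Real.norm_eq_abs, abs_of_nonneg (Real.sqrt_nonneg _), Real.sqrt_mul ha]
    nlinarith [sq_nonneg (Real.sqrt (f x).toReal - Real.sqrt (g x).toReal),
      Real.sq_sqrt ha, Real.sq_sqrt hb, Real.sqrt_nonneg (f x).toReal,
      Real.sqrt_nonneg (g x).toReal]

/-! ### Hellinger distance of densities -/

lemma sqHellinger_nonneg {α : Type*} [MeasurableSpace α] (P Q : Measure α) :
    0 ≤ sqHellinger P Q := by
  unfold sqHellinger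
  have : 0 ≤ ∫ x, (Real.sqrt ((P.rnDeriv (P + Q)) x).toReal
      - Real.sqrt ((Q.rnDeriv (P + Q)) x).toReal) ^ 2 ∂(P + Q) :=
    integral_nonneg fun x => sq_nonneg _
  linarith

lemma sqHellinger_withDensity {α : Type*} [MeasurableSpace α] (μ : Measure α) [SigmaFinite μ]
    {f g : α → ℝ≥0∞} (hf : Measurable f) (hg : Measurable g)
    (hff : ∀ x, f x ≠ ⊤) (hgf : ∀ x, g x ≠ ⊤)
    (hf1 : ∫⁻ x, f x ∂μ = 1) (hg1 : ∫⁻ x, g x ∂μ = 1) :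
    sqHellinger (μ.withDensity f) (μ.withDensity g)
      = 1 - ∫ x, Real.sqrt ((f x).toReal * (g x).toReal) ∂μ := by
  set s : α → ℝ≥0∞ := fun x => f x + g x with hs_def
  have hs : Measurable s := hf.add hg
  have hsf : ∀ x, s x ≠ ⊤ := fun x => by
    simp [hs_def, ENNReal.add_eq_top, hff x, hgf x]
  set ν : Measure α := μ.withDensity s with hν_def
  have hν_eq : μ.withDensity f + μ.withDensity g = ν :=
    (withDensity_add_left hf g).symm
  have hνfin : IsFiniteMeasure ν := by
    constructor
    rw [hν_def, withDensity_apply _ MeasurableSet.univ, setLIntegral_univ, hs_def]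
    rw [lintegral_add_left hf, hf1, hg1]
    exact ENNReal.add_lt_top.2 ⟨ENNReal.one_lt_top, ENNReal.one_lt_top⟩
  have hνsf : SigmaFinite ν := hνfin.toSigmaFinite
  -- P as withDensity over ν
  have hmulP : ∀ x, s x * (f x / s x) = f x := by
    intro x
    rcases eq_or_ne (s x) 0 with h0 | h0
    · have hfx : f x = 0 := by
        have := h0; simp only [hs_def, add_eq_zero] at this; exact this.1
      simp [h0, hfx]
    · exact ENNReal.mul_div_cancel h0 (hsf x)
  have hmulQ : ∀ x, s x * (g x / s x) = g x := by
    intro x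
    rcases eq_or_ne (s x) 0 with h0 | h0
    · have hgx : g x = 0 := by
        have := h0; simp only [hs_def, add_eq_zero] at this; exact this.2
      simp [h0, hgx]
    · exact ENNReal.mul_div_cancel h0 (hsf x)
  have hP : μ.withDensity f = ν.withDensity (fun x => f x / s x) := by
    rw [hν_def, show (fun x => f x / s x) = f / s from rfl, ← withDensity_mul μ hs (hf.div hs)]
    exact (withDensity_congr_ae (Filter.Eventually.of_forall fun x => (hmulP x).symm))
  have hQ : μ.withDensity g = ν.withDensity (fun x => g x / s x) := by
    rw [hν_def, show (fun x => g x / s x) = g / s from rfl, ← withDensity_mul μ hs (hg.div hs)]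
    exact (withDensity_congr_ae (Filter.Eventually.of_forall fun x => (hmulQ x).symm))
  have hp : (μ.withDensity f).rnDeriv ν =ᵐ[ν] fun x => f x / s x := by
    rw [hP]; exact Measure.rnDeriv_withDensity ν (hf.div hs)
  have hq : (μ.withDensity g).rnDeriv ν =ᵐ[ν] fun x => g x / s x := by
    rw [hQ]; exact Measure.rnDeriv_withDensity ν (hg.div hs)
  -- rewrite the Hellinger integral
  have hcongr : ∫ x, (Real.sqrt (((μ.withDensity f).rnDeriv ν) x).toReal
        - Real.sqrt (((μ.withDensity g).rnDeriv ν) x).toReal) ^ 2 ∂ν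
      = ∫ x, (Real.sqrt ((f x / s x)).toReal - Real.sqrt ((g x / s x)).toReal) ^ 2 ∂ν := by
    refine integral_congr_ae ?_
    filter_upwards [hp, hq] with x hx1 hx2
    rw [hx1, hx2]
  set φ : α → ℝ := fun x => (Real.sqrt ((f x / s x)).toReal - Real.sqrt ((g x / s x)).toReal) ^ 2
    with hφ_def
  set ψ : α → ℝ := fun x => (Real.sqrt (f x).toReal - Real.sqrt (g x).toReal) ^ 2 with hψ_def
  have hH : sqHellinger (μ.withDensity f) (μ.withDensity g) = (1/2) * ∫ x, φ x ∂ν := by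
    unfold sqHellinger
    rw [hν_eq, hcongr]
  -- change of measure from ν to μ
  have hν2 : ν = μ.withDensity (fun x => ((s x).toNNReal : ℝ≥0∞)) := by
    rw [hν_def]
    exact withDensity_congr_ae
      (Filter.Eventually.of_forall fun x => (ENNReal.coe_toNNReal (hsf x)).symm)
  have hchange : ∫ x, φ x ∂ν = ∫ x, (s x).toNNReal • φ x ∂μ := by
    rw [hν2]
    exact integral_withDensity_eq_integral_smul hs.ennreal_toNNReal φ
  have hpt : ∀ x, (s x).toNNReal • φ x = ψ x := by
    intro x
    have hab : (s x).toReal = (f x).toReal + (g x).toReal := by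
      rw [hs_def]; exact ENNReal.toReal_add (hff x) (hgf x)
    have ha : (0:ℝ) ≤ (f x).toReal := ENNReal.toReal_nonneg
    have hb : (0:ℝ) ≤ (g x).toReal := ENNReal.toReal_nonneg
    have hsmul : (s x).toNNReal • φ x = (s x).toReal * φ x := rfl
    rw [hsmul, hφ_def, hψ_def]
    simp only [ENNReal.toReal_div]
    set a := (f x).toReal
    set b := (g x).toReal
    set c := (s x).toReal
    rcases eq_or_lt_of_le (hab ▸ add_nonneg ha hb : (0:ℝ) ≤ c) with hc | hc
    · have ha0 : a = 0 := by linarith [hab ▸ hc.symm]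
      have hb0 : b = 0 := by linarith [hab ▸ hc.symm]
      rw [← hc, ha0, hb0]
      simp
    · rw [Real.sqrt_div ha c, Real.sqrt_div hb c, div_sub_div_same, div_pow,
        Real.sq_sqrt hc.le, mul_div_cancel₀ _ (ne_of_gt hc)]
  have hψ_exp : ∀ x, ψ x = (f x).toReal + (g x).toReal
      - 2 * Real.sqrt ((f x).toReal * (g x).toReal) := by
    intro x
    simp only [hψ_def]
    have ha : (0:ℝ) ≤ (f x).toReal := ENNReal.toReal_nonneg
    have hb : (0:ℝ) ≤ (g x).toReal := ENNReal.toReal_nonneg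
    rw [sub_sq, Real.sq_sqrt ha, Real.sq_sqrt hb, Real.sqrt_mul ha]
    ring
  have If : Integrable (fun x => (f x).toReal) μ :=
    integrable_toReal_of_lintegral_ne_top hf.aemeasurable (by rw [hf1]; exact ENNReal.one_ne_top)
  have Ig : Integrable (fun x => (g x).toReal) μ :=
    integrable_toReal_of_lintegral_ne_top hg.aemeasurable (by rw [hg1]; exact ENNReal.one_ne_top)
  have Isqrt : Integrable (fun x => Real.sqrt ((f x).toReal * (g x).toReal)) μ := by
    refine Integrable.mono' ((If.add Ig).div_const 2) ?_ ?_
    · exact (Real.continuous_sqrt.measurable.comp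
        (hf.ennreal_toReal.mul hg.ennreal_toReal)).aestronglyMeasurable
    · refine Filter.Eventually.of_forall fun x => ?_
      simp only [Pi.add_apply]
      have ha : (0:ℝ) ≤ (f x).toReal := ENNReal.toReal_nonneg
      have hb : (0:ℝ) ≤ (g x).toReal := ENNReal.toReal_nonneg
      rw [Real.norm_eq_abs, abs_of_nonneg (Real.sqrt_nonneg _), Real.sqrt_mul ha]
      nlinarith [sq_nonneg (Real.sqrt (f x).toReal - Real.sqrt (g x).toReal),
        Real.sq_sqrt ha, Real.sq_sqrt hb, Real.sqrt_nonneg (f x).toReal,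
        Real.sqrt_nonneg (g x).toReal]
  have hIf1 : ∫ x, (f x).toReal ∂μ = 1 := by
    rw [integral_toReal hf.aemeasurable
      (Filter.Eventually.of_forall fun x => lt_top_iff_ne_top.2 (hff x)), hf1, ENNReal.toReal_one]
  have hIg1 : ∫ x, (g x).toReal ∂μ = 1 := by
    rw [integral_toReal hg.aemeasurable
      (Filter.Eventually.of_forall fun x => lt_top_iff_ne_top.2 (hgf x)), hg1, ENNReal.toReal_one]
  have hfinal : ∫ x, ψ x ∂μ
      = 2 - 2 * ∫ x, Real.sqrt ((f x).toReal * (g x).toReal) ∂μ := by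
    calc ∫ x, ψ x ∂μ
        = ∫ x, ((fun x => (f x).toReal + (g x).toReal) x
            - (fun x => 2 * Real.sqrt ((f x).toReal * (g x).toReal)) x) ∂μ :=
          integral_congr_ae (Filter.Eventually.of_forall fun x => by
            rw [hψ_exp x])
      _ = (∫ x, ((f x).toReal + (g x).toReal) ∂μ)
            - ∫ x, 2 * Real.sqrt ((f x).toReal * (g x).toReal) ∂μ :=
          integral_sub (If.add Ig) (Isqrt.const_mul 2)
      _ = 2 - 2 * ∫ x, Real.sqrt ((f x).toReal * (g x).toReal) ∂μ := by
          rw [integral_add If Ig, hIf1, hIg1, MeasureTheory.integral_const_mul]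
          ring
  have hfin2 : ∫ x, φ x ∂ν = ∫ x, ψ x ∂μ := by
    rw [hchange]
    exact integral_congr_ae (Filter.Eventually.of_forall hpt)
  rw [hH, hfin2, hfinal]
  ring

/-! ### Main theorem -/

/-- with `L = n + 1 ≥ 2` and `K ≥ 2`,
`h²(P_{w,Q,F}, P_{v,R,G}) ≤ h²(w,v) + (L-1) maxₖ h²(Q_k, R_k) + L maxₖ h²(F_k, G_k)`. -/
theorem sqHellinger_hmmMix_le
    {Y : Type*} [MeasurableSpace Y] (K n : ℕ) (hK : 2 ≤ K) (hn : 1 ≤ n)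
    (w v : Fin K → ℝ) (Q R : Fin K → Fin K → ℝ)
    (hw0 : ∀ k, 0 ≤ w k) (hv0 : ∀ k, 0 ≤ v k)
    (hw1 : ∑ k, w k = 1) (hv1 : ∑ k, v k = 1)
    (hQ0 : ∀ k k', 0 ≤ Q k k') (hR0 : ∀ k k', 0 ≤ R k k')
    (hQ1 : ∀ k, ∑ k', Q k k' = 1) (hR1 : ∀ k, ∑ k', R k k' = 1)
    (F G : Fin K → Measure Y)
    (hF : ∀ k, IsProbabilityMeasure (F k)) (hG : ∀ k, IsProbabilityMeasure (G k)) :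
    sqHellinger (hmmMix K n w Q F) (hmmMix K n v R G) ≤
      sqHellingerVec w v + n * (⨆ k : Fin K, sqHellingerVec (Q k) (R k))
        + (n + 1) * (⨆ k : Fin K, sqHellinger (F k) (G k)) := by
  classical
  haveI : NeZero K := ⟨by omega⟩
  -- the dominating measure on Y
  set μY : Measure Y := ∑ k : Fin K, (F k + G k) with hμY_def
  haveI hμYfin : IsFiniteMeasure μY := by
    constructor
    rw [hμY_def, Measure.finset_sum_apply]
    refine ENNReal.sum_lt_top.2 fun k _ => ?_
    rw [Measure.add_apply, measure_univ, measure_univ]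
    exact ENNReal.add_lt_top.2 ⟨ENNReal.one_lt_top, ENNReal.one_lt_top⟩
  have hsum_zero : ∀ (k : Fin K) (s : Set Y), μY s = 0 → F k s = 0 ∧ G k s = 0 := by
    intro k s hs
    rw [hμY_def, Measure.finset_sum_apply] at hs
    have hk := (Finset.sum_eq_zero_iff.1 hs) k (Finset.mem_univ k)
    rw [Measure.add_apply, add_eq_zero] at hk
    exact hk
  have hFac : ∀ k, F k ≪ μY := fun k =>
    Measure.AbsolutelyContinuous.mk fun s _ hs => (hsum_zero k s hs).1
  have hGac : ∀ k, G k ≪ μY := fun k =>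
    Measure.AbsolutelyContinuous.mk fun s _ hs => (hsum_zero k s hs).2
  -- densities
  set f : Fin K → Y → ℝ≥0∞ := fun k x => (((F k).rnDeriv μY x).toNNReal : ℝ≥0∞) with hf_def
  set g : Fin K → Y → ℝ≥0∞ := fun k x => (((G k).rnDeriv μY x).toNNReal : ℝ≥0∞) with hg_def
  have hf_meas : ∀ k, Measurable (f k) := fun k =>
    (Measure.measurable_rnDeriv (F k) μY).ennreal_toNNReal.coe_nnreal_ennreal
  have hg_meas : ∀ k, Measurable (g k) := fun k =>
    (Measure.measurable_rnDeriv (G k) μY).ennreal_toNNReal.coe_nnreal_ennreal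
  have hf_ne : ∀ k x, f k x ≠ ⊤ := fun k x => ENNReal.coe_ne_top
  have hg_ne : ∀ k x, g k x ≠ ⊤ := fun k x => ENNReal.coe_ne_top
  have hf_ae : ∀ k, f k =ᵐ[μY] (F k).rnDeriv μY := fun k => by
    filter_upwards [Measure.rnDeriv_lt_top (F k) μY] with x hx
    exact ENNReal.coe_toNNReal hx.ne
  have hg_ae : ∀ k, g k =ᵐ[μY] (G k).rnDeriv μY := fun k => by
    filter_upwards [Measure.rnDeriv_lt_top (G k) μY] with x hx
    exact ENNReal.coe_toNNReal hx.ne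
  have hFwd : ∀ k, μY.withDensity (f k) = F k := fun k =>
    (withDensity_congr_ae (hf_ae k)).trans (Measure.withDensity_rnDeriv_eq _ _ (hFac k))
  have hGwd : ∀ k, μY.withDensity (g k) = G k := fun k =>
    (withDensity_congr_ae (hg_ae k)).trans (Measure.withDensity_rnDeriv_eq _ _ (hGac k))
  have hf1 : ∀ k, ∫⁻ x, f k x ∂μY = 1 := fun k => by
    rw [← setLIntegral_univ, ← withDensity_apply _ MeasurableSet.univ, hFwd k]
    exact measure_univ
  have hg1 : ∀ k, ∫⁻ x, g k x ∂μY = 1 := fun k => by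
    rw [← setLIntegral_univ, ← withDensity_apply _ MeasurableSet.univ, hGwd k]
    exact measure_univ
  -- path coefficients
  set c : (Fin (n+1) → Fin K) → ℝ :=
    fun k => w (k 0) * ∏ l : Fin n, Q (k l.castSucc) (k l.succ) with hc_def
  set d : (Fin (n+1) → Fin K) → ℝ :=
    fun k => v (k 0) * ∏ l : Fin n, R (k l.castSucc) (k l.succ) with hd_def
  have hc0 : ∀ k, 0 ≤ c k := fun k =>
    mul_nonneg (hw0 _) (Finset.prod_nonneg fun l _ => hQ0 _ _)
  have hd0 : ∀ k, 0 ≤ d k := fun k =>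
    mul_nonneg (hv0 _) (Finset.prod_nonneg fun l _ => hR0 _ _)
  have hc1 : ∑ k, c k = 1 := by rw [hc_def]; rw [chain_sum_eq n w Q hQ1]; exact hw1
  have hd1 : ∑ k, d k = 1 := by rw [hd_def]; rw [chain_sum_eq n v R hR1]; exact hv1
  -- big densities
  set D : (Fin (n+1) → Y) → ℝ≥0∞ :=
    fun x => ∑ k : Fin (n+1) → Fin K, ENNReal.ofReal (c k) * ∏ l, f (k l) (x l) with hD_def
  set E : (Fin (n+1) → Y) → ℝ≥0∞ :=
    fun x => ∑ k : Fin (n+1) → Fin K, ENNReal.ofReal (d k) * ∏ l, g (k l) (x l) with hE_def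
  have hfk_meas : ∀ k : Fin (n+1) → Fin K,
      Measurable (fun x : Fin (n+1) → Y => ∏ l, f (k l) (x l)) :=
    fun k => Finset.measurable_prod _ fun l _ => (hf_meas (k l)).comp (measurable_pi_apply l)
  have hgk_meas : ∀ k : Fin (n+1) → Fin K,
      Measurable (fun x : Fin (n+1) → Y => ∏ l, g (k l) (x l)) :=
    fun k => Finset.measurable_prod _ fun l _ => (hg_meas (k l)).comp (measurable_pi_apply l)
  have hDk_meas : ∀ k : Fin (n+1) → Fin K,
      Measurable (fun x : Fin (n+1) → Y => ENNReal.ofReal (c k) * ∏ l, f (k l) (x l)) :=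
    fun k => measurable_const.mul (hfk_meas k)
  have hEk_meas : ∀ k : Fin (n+1) → Fin K,
      Measurable (fun x : Fin (n+1) → Y => ENNReal.ofReal (d k) * ∏ l, g (k l) (x l)) :=
    fun k => measurable_const.mul (hgk_meas k)
  have hD_meas : Measurable D := Finset.measurable_sum _ fun k _ => hDk_meas k
  have hE_meas : Measurable E := Finset.measurable_sum _ fun k _ => hEk_meas k
  have hD_ne : ∀ x, D x ≠ ⊤ := fun x => by
    rw [hD_def]
    refine (ENNReal.sum_lt_top.2 fun k _ => ?_).ne
    exact ENNReal.mul_lt_top ENNReal.ofReal_lt_top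
      (ENNReal.prod_lt_top fun l _ => lt_top_iff_ne_top.2 (hf_ne _ _))
  have hE_ne : ∀ x, E x ≠ ⊤ := fun x => by
    rw [hE_def]
    refine (ENNReal.sum_lt_top.2 fun k _ => ?_).ne
    exact ENNReal.mul_lt_top ENNReal.ofReal_lt_top
      (ENNReal.prod_lt_top fun l _ => lt_top_iff_ne_top.2 (hg_ne _ _))
  -- identification of the mixture laws
  have hP : hmmMix K n w Q F = (Measure.pi fun _ : Fin (n+1) => μY).withDensity D := by
    unfold hmmMix
    rw [hD_def, withDensity_finset_sum _ _ _ (fun k _ => hDk_meas k)]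
    refine Finset.sum_congr rfl fun k _ => ?_
    have h1 : (fun l : Fin (n+1) => F (k l)) = fun l => μY.withDensity (f (k l)) :=
      funext fun l => (hFwd (k l)).symm
    rw [h1, pi_withDensity _ _ (fun l => hf_meas (k l))
      (fun l => by rw [hf1 (k l)]; exact ENNReal.one_ne_top)]
    rw [← withDensity_smul _ (hfk_meas k)]
    rfl
  have hPg : hmmMix K n v R G = (Measure.pi fun _ : Fin (n+1) => μY).withDensity E := by
    unfold hmmMix
    rw [hE_def, withDensity_finset_sum _ _ _ (fun k _ => hEk_meas k)]
    refine Finset.sum_congr rfl fun k _ => ?_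
    have h1 : (fun l : Fin (n+1) => G (k l)) = fun l => μY.withDensity (g (k l)) :=
      funext fun l => (hGwd (k l)).symm
    rw [h1, pi_withDensity _ _ (fun l => hg_meas (k l))
      (fun l => by rw [hg1 (k l)]; exact ENNReal.one_ne_top)]
    rw [← withDensity_smul _ (hgk_meas k)]
    rfl
  -- total masses
  have hD1 : ∫⁻ x, D x ∂(Measure.pi fun _ : Fin (n+1) => μY) = 1 := by
    rw [← setLIntegral_univ, ← withDensity_apply _ MeasurableSet.univ, ← hP]
    unfold hmmMix
    rw [Measure.finset_sum_apply]
    have : ∀ k : Fin (n+1) → Fin K,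
        (ENNReal.ofReal (w (k 0) * ∏ l : Fin n, Q (k l.castSucc) (k l.succ)) •
          Measure.pi (fun l => F (k l))) Set.univ = ENNReal.ofReal (c k) := by
      intro k
      rw [Measure.smul_apply, measure_univ, smul_eq_mul, mul_one, hc_def]
    rw [Finset.sum_congr rfl fun k _ => this k,
      ← ENNReal.ofReal_sum_of_nonneg (fun k _ => hc0 k), hc1, ENNReal.ofReal_one]
  have hE1 : ∫⁻ x, E x ∂(Measure.pi fun _ : Fin (n+1) => μY) = 1 := by
    rw [← setLIntegral_univ, ← withDensity_apply _ MeasurableSet.univ, ← hPg]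
    unfold hmmMix
    rw [Measure.finset_sum_apply]
    have : ∀ k : Fin (n+1) → Fin K,
        (ENNReal.ofReal (v (k 0) * ∏ l : Fin n, R (k l.castSucc) (k l.succ)) •
          Measure.pi (fun l => G (k l))) Set.univ = ENNReal.ofReal (d k) := by
      intro k
      rw [Measure.smul_apply, measure_univ, smul_eq_mul, mul_one, hd_def]
    rw [Finset.sum_congr rfl fun k _ => this k,
      ← ENNReal.ofReal_sum_of_nonneg (fun k _ => hd0 k), hd1, ENNReal.ofReal_one]
  -- the big Hellinger identity
  have hbig : sqHellinger (hmmMix K n w Q F) (hmmMix K n v R G)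
      = 1 - ∫ x, Real.sqrt ((D x).toReal * (E x).toReal)
          ∂(Measure.pi fun _ : Fin (n+1) => μY) := by
    rw [hP, hPg]
    exact sqHellinger_withDensity _ hD_meas hE_meas hD_ne hE_ne hD1 hE1
  -- coordinate affinities
  set ρ : Fin K → ℝ := fun k => ∫ y, Real.sqrt ((f k y).toReal * (g k y).toReal) ∂μY with hρ_def
  have hρ_eq : ∀ k, sqHellinger (F k) (G k) = 1 - ρ k := fun k => by
    rw [← hFwd k, ← hGwd k, hρ_def]
    exact sqHellinger_withDensity _ (hf_meas k) (hg_meas k) (hf_ne k) (hg_ne k) (hf1 k) (hg1 k)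
  have hρ0 : ∀ k, 0 ≤ ρ k := fun k => integral_nonneg fun y => Real.sqrt_nonneg _
  have hρ1 : ∀ k, ρ k ≤ 1 := fun k => by
    have := sqHellinger_nonneg (F k) (G k)
    rw [hρ_eq k] at this
    linarith
  -- the two suprema
  set εF : ℝ := ⨆ k : Fin K, sqHellinger (F k) (G k) with hεF_def
  set εQ : ℝ := ⨆ k : Fin K, sqHellingerVec (Q k) (R k) with hεQ_def
  have hεF0 : 0 ≤ εF := le_ciSup_of_le (Set.Finite.bddAbove (Set.finite_range _))
    ⟨0, by omega⟩ (sqHellinger_nonneg _ _)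
  have hεF1 : εF ≤ 1 := ciSup_le fun k => by rw [hρ_eq k]; linarith [hρ0 k]
  have hρ_ge : ∀ k, 1 - εF ≤ ρ k := fun k => by
    have h := le_ciSup (Set.Finite.bddAbove (Set.finite_range
      (fun k => sqHellinger (F k) (G k)))) k
    rw [hρ_eq k] at h
    rw [hεF_def]
    linarith
  have hrow_eq : ∀ i, sqHellingerVec (Q i) (R i) = 1 - ∑ j, Real.sqrt (Q i j * R i j) :=
    fun i => sqHellingerVec_eq (Q i) (R i) (hQ0 i) (hR0 i) (hQ1 i) (hR1 i)
  have hεQ0 : 0 ≤ εQ := le_ciSup_of_le (Set.Finite.bddAbove (Set.finite_range _))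
    ⟨0, by omega⟩ (sqHellingerVec_nonneg _ _)
  have hεQ1 : εQ ≤ 1 := ciSup_le fun i => by
    rw [hrow_eq i]
    have : (0:ℝ) ≤ ∑ j, Real.sqrt (Q i j * R i j) :=
      Finset.sum_nonneg fun j _ => Real.sqrt_nonneg _
    linarith
  have hrow_ge : ∀ i, 1 - εQ ≤ ∑ j, Real.sqrt (Q i j * R i j) := fun i => by
    have h := le_ciSup (Set.Finite.bddAbove (Set.finite_range
      (fun i => sqHellingerVec (Q i) (R i)))) i
    rw [hrow_eq i] at h
    rw [hεQ_def]
    linarith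
  -- integrability of coordinate affinity factors
  have hIsq : ∀ j : Fin K, Integrable (fun y => Real.sqrt ((f j y).toReal * (g j y).toReal)) μY :=
    fun j => integrable_sqrt_mul (hf_meas j) (hg_meas j)
      (by rw [hf1 j]; exact ENNReal.one_ne_top) (by rw [hg1 j]; exact ENNReal.one_ne_top)
  -- path observables
  have hH_int : ∀ k : Fin (n+1) → Fin K, Integrable
      (fun x : Fin (n+1) → Y => ∏ l, Real.sqrt ((f (k l) (x l)).toReal * (g (k l) (x l)).toReal))
      (Measure.pi fun _ : Fin (n+1) => μY) :=
    fun k => integrable_pi_prod _ _ (fun l => hIsq (k l))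
  have hH_eq : ∀ k : Fin (n+1) → Fin K,
      ∫ x : Fin (n+1) → Y, ∏ l, Real.sqrt ((f (k l) (x l)).toReal * (g (k l) (x l)).toReal)
        ∂(Measure.pi fun _ : Fin (n+1) => μY) = ∏ l, ρ (k l) :=
    fun k => integral_pi_prod _ (fun l y => Real.sqrt ((f (k l) y).toReal * (g (k l) y).toReal))
  -- pointwise Cauchy-Schwarz
  have hpt : ∀ x : Fin (n+1) → Y,
      ∑ k : Fin (n+1) → Fin K, Real.sqrt (c k * d k) *
          ∏ l, Real.sqrt ((f (k l) (x l)).toReal * (g (k l) (x l)).toReal)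
        ≤ Real.sqrt ((D x).toReal * (E x).toReal) := by
    intro x
    set a : (Fin (n+1) → Fin K) → ℝ := fun k => c k * ∏ l, (f (k l) (x l)).toReal with ha_def
    set b : (Fin (n+1) → Fin K) → ℝ := fun k => d k * ∏ l, (g (k l) (x l)).toReal with hb_def
    have ha0 : ∀ k, 0 ≤ a k := fun k => mul_nonneg (hc0 k)
      (Finset.prod_nonneg fun l _ => ENNReal.toReal_nonneg)
    have hb0 : ∀ k, 0 ≤ b k := fun k => mul_nonneg (hd0 k)
      (Finset.prod_nonneg fun l _ => ENNReal.toReal_nonneg)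
    have haD : (D x).toReal = ∑ k, a k := by
      rw [hD_def]
      rw [ENNReal.toReal_sum (fun k _ => ENNReal.mul_lt_top ENNReal.ofReal_lt_top
        (ENNReal.prod_lt_top fun l _ => lt_top_iff_ne_top.2 (hf_ne _ _)) |>.ne)]
      exact Finset.sum_congr rfl fun k _ => by
        rw [ENNReal.toReal_mul, ENNReal.toReal_ofReal (hc0 k), ENNReal.toReal_prod, ha_def]
    have hbE : (E x).toReal = ∑ k, b k := by
      rw [hE_def]
      rw [ENNReal.toReal_sum (fun k _ => ENNReal.mul_lt_top ENNReal.ofReal_lt_top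
        (ENNReal.prod_lt_top fun l _ => lt_top_iff_ne_top.2 (hg_ne _ _)) |>.ne)]
      exact Finset.sum_congr rfl fun k _ => by
        rw [ENNReal.toReal_mul, ENNReal.toReal_ofReal (hd0 k), ENNReal.toReal_prod, hb_def]
    have hterm : ∀ k, Real.sqrt (c k * d k) *
        ∏ l, Real.sqrt ((f (k l) (x l)).toReal * (g (k l) (x l)).toReal)
        = Real.sqrt (a k * b k) := by
      intro k
      have : a k * b k = (c k * d k) *
          ∏ l, ((f (k l) (x l)).toReal * (g (k l) (x l)).toReal) := by
        rw [ha_def, hb_def, Finset.prod_mul_distrib]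
        ring
      rw [this, Real.sqrt_mul (mul_nonneg (hc0 k) (hd0 k)),
        aux_sqrt_prod _ (fun l _ => mul_nonneg ENNReal.toReal_nonneg ENNReal.toReal_nonneg)]
    calc ∑ k : Fin (n+1) → Fin K, Real.sqrt (c k * d k) *
            ∏ l, Real.sqrt ((f (k l) (x l)).toReal * (g (k l) (x l)).toReal)
        = ∑ k, Real.sqrt (a k * b k) := Finset.sum_congr rfl fun k _ => hterm k
      _ ≤ Real.sqrt ((∑ k, a k) * (∑ k, b k)) := aux_sum_sqrt_mul_le a b ha0 hb0
      _ = Real.sqrt ((D x).toReal * (E x).toReal) := by rw [haD, hbE]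
  -- integrability of the big affinity integrand
  have hIbig : Integrable (fun x => Real.sqrt ((D x).toReal * (E x).toReal))
      (Measure.pi fun _ : Fin (n+1) => μY) :=
    integrable_sqrt_mul hD_meas hE_meas (by rw [hD1]; exact ENNReal.one_ne_top)
      (by rw [hE1]; exact ENNReal.one_ne_top)
  -- the affinity lower bound
  have hA_ge : ∑ k : Fin (n+1) → Fin K, Real.sqrt (c k * d k) * ∏ l, ρ (k l)
      ≤ ∫ x, Real.sqrt ((D x).toReal * (E x).toReal)
          ∂(Measure.pi fun _ : Fin (n+1) => μY) := by
    have hsum_int : Integrable (fun x : Fin (n+1) → Y => ∑ k : Fin (n+1) → Fin K,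
        Real.sqrt (c k * d k) *
          ∏ l, Real.sqrt ((f (k l) (x l)).toReal * (g (k l) (x l)).toReal))
        (Measure.pi fun _ : Fin (n+1) => μY) :=
      integrable_finset_sum _ fun k _ => (hH_int k).const_mul _
    calc ∑ k : Fin (n+1) → Fin K, Real.sqrt (c k * d k) * ∏ l, ρ (k l)
        = ∫ x, (∑ k : Fin (n+1) → Fin K, Real.sqrt (c k * d k) *
            ∏ l, Real.sqrt ((f (k l) (x l)).toReal * (g (k l) (x l)).toReal))
            ∂(Measure.pi fun _ : Fin (n+1) => μY) := by
          rw [integral_finset_sum _ fun k _ => (hH_int k).const_mul _]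
          exact Finset.sum_congr rfl fun k _ => by
            rw [MeasureTheory.integral_const_mul, hH_eq k]
      _ ≤ _ := integral_mono hsum_int hIbig hpt
  -- lower bound the path affinity sum
  have hprod_ge : ∀ k : Fin (n+1) → Fin K, (1 - εF) ^ (n+1) ≤ ∏ l, ρ (k l) := by
    intro k
    calc (1 - εF) ^ (n+1) = ∏ _l : Fin (n+1), (1 - εF) := by
          rw [Finset.prod_const, Finset.card_univ, Fintype.card_fin]
      _ ≤ ∏ l, ρ (k l) := Finset.prod_le_prod (fun l _ => by linarith)
          (fun l _ => hρ_ge (k l))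
  have hstep2 : (∑ k : Fin (n+1) → Fin K, Real.sqrt (c k * d k)) * (1 - εF) ^ (n+1)
      ≤ ∑ k : Fin (n+1) → Fin K, Real.sqrt (c k * d k) * ∏ l, ρ (k l) := by
    rw [Finset.sum_mul]
    exact Finset.sum_le_sum fun k _ =>
      mul_le_mul_of_nonneg_left (hprod_ge k) (Real.sqrt_nonneg _)
  have hsqrtcd : ∀ k : Fin (n+1) → Fin K, Real.sqrt (c k * d k)
      = Real.sqrt (w (k 0) * v (k 0)) *
          ∏ l : Fin n, Real.sqrt (Q (k l.castSucc) (k l.succ) * R (k l.castSucc) (k l.succ)) := by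
    intro k
    have : c k * d k = (w (k 0) * v (k 0)) *
        ∏ l : Fin n, (Q (k l.castSucc) (k l.succ) * R (k l.castSucc) (k l.succ)) := by
      rw [hc_def, hd_def, Finset.prod_mul_distrib]
      ring
    rw [this, Real.sqrt_mul (mul_nonneg (hw0 _) (hv0 _)),
      aux_sqrt_prod _ (fun l _ => mul_nonneg (hQ0 _ _) (hR0 _ _))]
  have hstep3 : (∑ i, Real.sqrt (w i * v i)) * (1 - εQ) ^ n
      ≤ ∑ k : Fin (n+1) → Fin K, Real.sqrt (c k * d k) := by
    rw [Finset.sum_congr rfl fun k _ => hsqrtcd k]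
    exact chain_sum_ge n (fun i => Real.sqrt (w i * v i))
      (fun i j => Real.sqrt (Q i j * R i j)) εQ
      (fun i => Real.sqrt_nonneg _) (fun i j => Real.sqrt_nonneg _) (by linarith)
      hrow_ge
  have hwv_eq : sqHellingerVec w v = 1 - ∑ i, Real.sqrt (w i * v i) :=
    sqHellingerVec_eq w v hw0 hv0 hw1 hv1
  set εw : ℝ := sqHellingerVec w v with hεw_def
  have hεw0 : 0 ≤ εw := sqHellingerVec_nonneg w v
  have hεw1 : εw ≤ 1 := by
    rw [hwv_eq]
    have : (0:ℝ) ≤ ∑ i, Real.sqrt (w i * v i) :=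
      Finset.sum_nonneg fun i _ => Real.sqrt_nonneg _
    linarith
  have hsum_wv : ∑ i, Real.sqrt (w i * v i) = 1 - εw := by rw [hwv_eq]; ring
  -- put everything together
  have hA_final : (1 - εw) * (1 - εQ) ^ n * (1 - εF) ^ (n+1)
      ≤ ∫ x, Real.sqrt ((D x).toReal * (E x).toReal)
          ∂(Measure.pi fun _ : Fin (n+1) => μY) := by
    refine le_trans ?_ hA_ge
    refine le_trans ?_ hstep2
    refine le_trans ?_ (mul_le_mul_of_nonneg_right hstep3 (pow_nonneg (by linarith) (n+1)))
    rw [hsum_wv]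
  have hfinal := aux_final_bound εw εQ εF n hεw0 hεw1 hεQ0 hεQ1 hεF0 hεF1
  rw [hbig]
  push_cast at hfinal ⊢
  linarith
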